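/- Let φ ∈ ℝ and let f : (0,∞) → ℝ be differentiable. Then F_{φ,f} is differentiable on ℝ²∖{0} and its scalar curl satisfies, for every q ≠ 0, ∇^⊥·F_{φ,f}(q) = ∂₁(F_{φ,f})₂(q) − ∂₂(F_{φ,f})₁(q) = sin(φ) · (2 f(‖q‖) + ‖q‖ f'(‖q‖)). -/

import Mathlib

open Filter Set

noncomputable section

abbrev V2 : Type := EuclideanSpace ℝ (Fin 2)

/-- Rotation of `ℝ²` by angle `φ`. -/
def Rot (φ : ℝ) (q : V2) : V2 :=
  !₂[Real.cos φ * q 0 - Real.sin φ * q 1, Real.sin φ * q 0 + Real.cos φ * q 1]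

/-- The kernel `F_{φ,f}(q) = f(‖q‖) R_φ q`. -/
def Fpf (φ : ℝ) (f : ℝ → ℝ) (q : V2) : V2 := f ‖q‖ • Rot φ q

/-- The partial derivative `∂ⱼ Fₖ (q)`. -/
def pderiv2 (F : V2 → V2) (j k : Fin 2) (q : V2) : ℝ :=
  fderiv ℝ F q (EuclideanSpace.single j 1) k

/-- The divergence `∇·F = ∂₁F₁ + ∂₂F₂`. -/
def divF (F : V2 → V2) (q : V2) : ℝ := pderiv2 F 0 0 q + pderiv2 F 1 1 q

/-- The scalar curl `∇^⊥·F = ∂₁F₂ − ∂₂F₁`. -/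
def curlF (F : V2 → V2) (q : V2) : ℝ := pderiv2 F 0 1 q - pderiv2 F 1 0 q

end


noncomputable def RotL (φ : ℝ) : V2 →L[ℝ] V2 :=
  LinearMap.toContinuousLinearMap
  { toFun := Rot φ
    map_add' := by
      intro x y; ext i; fin_cases i <;>
        simp [Rot, PiLp.add_apply] <;> ring
    map_smul' := by
      intro c x; ext i; fin_cases i <;>
        simp [Rot, PiLp.smul_apply, smul_eq_mul] <;> ring }

lemma RotL_apply (φ : ℝ) (q : V2) : RotL φ q = Rot φ q := rfl

lemma hasFDerivAt_norm' (q : V2) (hq : q ≠ 0) :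
    HasFDerivAt (fun x : V2 => ‖x‖) (‖q‖⁻¹ • innerSL ℝ q) q := by
  have h1 : HasFDerivAt (fun x : V2 => ‖x‖ ^ 2) (2 • innerSL ℝ q) q :=
    (hasFDerivAt_id q).norm_sq
  have h2 := h1.sqrt (pow_ne_zero 2 (norm_ne_zero_iff.mpr hq))
  have hn : ∀ x : V2, Real.sqrt (‖x‖ ^ 2) = ‖x‖ := fun x =>
    Real.sqrt_sq (norm_nonneg x)
  have hq0 : ‖q‖ ≠ 0 := norm_ne_zero_iff.mpr hq
  convert h2 using 1
  · rfl
  · funext x; exact (hn x).symm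
  · rw [hn q]
    ext v
    simp [ContinuousLinearMap.smul_apply]
    ring

/-- `F_{φ,f}` is differentiable away from the origin and its
scalar curl is `sin φ · (2 f(‖q‖) + ‖q‖ f'(‖q‖))`. -/
theorem curl_Fpf (φ : ℝ) (f : ℝ → ℝ)
    (hf : ∀ x : ℝ, 0 < x → DifferentiableAt ℝ f x) :
    ∀ q : V2, q ≠ 0 →
      DifferentiableAt ℝ (Fpf φ f) q ∧
      curlF (Fpf φ f) q = Real.sin φ * (2 * f ‖q‖ + ‖q‖ * deriv f ‖q‖) := by
  intro q hq
  have hq0 : (0:ℝ) < ‖q‖ := norm_pos_iff.mpr hq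
  have hnorm := hasFDerivAt_norm' q hq
  have hfd : HasDerivAt f (deriv f ‖q‖) ‖q‖ := (hf _ hq0).hasDerivAt
  have hg : HasFDerivAt (fun x : V2 => f ‖x‖)
      (deriv f ‖q‖ • (‖q‖⁻¹ • innerSL ℝ q)) q :=
    hfd.comp_hasFDerivAt q hnorm
  have hR : HasFDerivAt (Rot φ) (RotL φ) q := (RotL φ).hasFDerivAt
  have hF : HasFDerivAt (Fpf φ f)
      (f ‖q‖ • RotL φ +
        (deriv f ‖q‖ • (‖q‖⁻¹ • innerSL ℝ q)).smulRight (Rot φ q)) q :=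
    hg.smul hR
  refine ⟨hF.differentiableAt, ?_⟩
  have hfder := hF.fderiv
  have hsq : q 0 ^ 2 + q 1 ^ 2 = ‖q‖ ^ 2 := by
    rw [EuclideanSpace.norm_eq, Real.sq_sqrt (by positivity)]
    simp [Fin.sum_univ_two, sq_abs]
  have hqn : ‖q‖ ≠ 0 := ne_of_gt hq0
  simp only [curlF, pderiv2, hfder]
  simp [RotL_apply, Rot, ContinuousLinearMap.smul_apply, PiLp.add_apply,
    PiLp.smul_apply, smul_eq_mul, EuclideanSpace.inner_single_right,
    EuclideanSpace.single_apply, real_inner_comm]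
  field_simp
  linear_combination deriv f ‖q‖ * Real.sin φ * hsq
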